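/- arXiv:2203.04677 — 3 statements merged into one kernel-verified Lean document; each statement's English description precedes it below -/
import Mathlib

section
/- Let a, a₁, b₁ be positive integers and set r = a·b₁ − a₁ (assumed positive). Let 𝕊¹ = {u ∈ ℂ : |u| = 1} and define π′ : ℂ × ℂ × 𝕊¹ → ℂ × ℂ × 𝕊¹ by π′(p, q₁, u) = (u^r p, u⁻¹q₁, u^{−a}). Then π′ is surjective, and π′(p, q₁, u) = π′(p′, q₁′, u′) if and only if there exists ε ∈ ℂ with ε^a = 1 such that p′ = ε^{a₁}p, q₁′ = εq₁ and u′ = εu. -/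
/-- With `r = a·b₁ − a₁ > 0`, the map `π′(p, q₁, u) = (u^r p, u⁻¹q₁, u^{−a})` on
`ℂ × ℂ × 𝕊¹` is surjective, and `π′(p, q₁, u) = π′(p′, q₁′, u′)` iff there is `ε` with
`ε^a = 1`, `p′ = ε^{a₁}p`, `q₁′ = εq₁`, `u′ = εu`. -/
theorem stmt_11 (a a₁ b₁ : ℕ) (ha : 0 < a) (ha₁ : 0 < a₁) (hb₁ : 0 < b₁)
    (r : ℕ) (hr : 0 < r) (hrel : (r : ℤ) = a * b₁ - a₁) :
    (∀ p' q₁' u' : ℂ, ‖u'‖ = 1 →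
      ∃ p q₁ u : ℂ, ‖u‖ = 1 ∧
        (u ^ r * p, u⁻¹ * q₁, (u ^ a)⁻¹) = (p', q₁', u')) ∧
    (∀ p q₁ u p' q₁' u' : ℂ, ‖u‖ = 1 → ‖u'‖ = 1 →
      ((u ^ r * p, u⁻¹ * q₁, (u ^ a)⁻¹) = (u' ^ r * p', u'⁻¹ * q₁', (u' ^ a)⁻¹) ↔
        ∃ ε : ℂ, ε ^ a = 1 ∧ p' = ε ^ a₁ * p ∧ q₁' = ε * q₁ ∧ u' = ε * u)) := by
  have key : r + a₁ = a * b₁ := by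
    have : (r : ℤ) + a₁ = a * b₁ := by linarith
    exact_mod_cast this
  constructor
  · intro p' q₁' u' hu'
    have hu0' : u' ≠ 0 := by
      intro h; rw [h] at hu'; simp at hu'
    obtain ⟨u, hu⟩ := IsAlgClosed.exists_pow_nat_eq (k := ℂ) u'⁻¹ ha
    have hu0 : u ≠ 0 := by
      intro h
      rw [h, zero_pow ha.ne'] at hu
      exact hu0' (by simpa using hu.symm)
    have habs : ‖u‖ = 1 := by
      have h1 : ‖u‖ ^ a = 1 := by
        rw [← norm_pow, hu, norm_inv, hu', inv_one]
      rcases (pow_eq_one_iff_cases.mp h1 : _) with h | h | h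
      · omega
      · exact h
      · exfalso
        have := norm_nonneg u
        linarith [h.1]
    refine ⟨(u ^ r)⁻¹ * p', u * q₁', u, habs, ?_⟩
    have hur : u ^ r ≠ 0 := pow_ne_zero _ hu0
    simp only [Prod.mk.injEq]
    refine ⟨by field_simp, by field_simp, by rw [hu, inv_inv]⟩
  · intro p q₁ u p' q₁' u' hu hu'
    have hu0 : u ≠ 0 := by intro h; rw [h] at hu; simp at hu
    have hu0' : u' ≠ 0 := by intro h; rw [h] at hu'; simp at hu'
    constructor
    · intro h
      obtain ⟨h1, h2, h3⟩ : u ^ r * p = u' ^ r * p' ∧ u⁻¹ * q₁ = u'⁻¹ * q₁' ∧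
          (u ^ a)⁻¹ = (u' ^ a)⁻¹ := by simpa [Prod.ext_iff] using h
      have hpow : u ^ a = u' ^ a := inv_injective h3
      refine ⟨u' * u⁻¹, ?_, ?_, ?_, by field_simp⟩
      · rw [mul_pow, inv_pow, ← hpow]
        field_simp
      · -- p' = (u' * u⁻¹) ^ a₁ * p
        have hcanc : p' * u ^ a₁ * u' ^ r = (u' * u⁻¹) ^ a₁ * p * u ^ a₁ * u' ^ r := by
          have e1 : p' * u ^ a₁ * u' ^ r = (u' ^ r * p') * u ^ a₁ := by ring
          have e2 : (u' * u⁻¹) ^ a₁ * p * u ^ a₁ * u' ^ r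
              = u' ^ (a₁ + r) * p := by
            rw [mul_pow, inv_pow, pow_add]
            field_simp
          rw [e1, ← h1, e2]
          have : u ^ r * p * u ^ a₁ = u ^ (r + a₁) * p := by rw [pow_add]; ring
          rw [this, show r + a₁ = a * b₁ from key, show a₁ + r = a * b₁ from by omega,
            pow_mul, pow_mul, hpow]
        exact mul_right_cancel₀ (pow_ne_zero a₁ hu0)
          (mul_right_cancel₀ (pow_ne_zero r hu0') hcanc)
      · -- q₁' = (u' * u⁻¹) * q₁
        field_simp at h2 ⊢
        linear_combination -h2
    · rintro ⟨ε, hεa, rfl, rfl, rfl⟩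
      have hε0 : ε ≠ 0 := by
        intro h; rw [h, zero_pow ha.ne'] at hεa; exact zero_ne_one hεa
      have hεr : ε ^ r * ε ^ a₁ = 1 := by
        rw [← pow_add, key, pow_mul, hεa, one_pow]
      simp only [Prod.mk.injEq]
      refine ⟨?_, ?_, ?_⟩
      · rw [mul_pow]
        linear_combination (-(u ^ r * p)) * hεr
      · field_simp
      · rw [mul_pow, hεa, one_mul]
end

section
/- Let a, a₁, b be positive integers with r = a·b − a₁ positive. Define G on A = {(p, q₁, q₂) ∈ ℂ³ : |q₁| = 1, q₂ ≠ 0} by G(p, q₁, q₂) = (q₂⁻¹, q₁, p|q₂|²(q₂/|q₂|)^b). Then: (i) G is a bijection from A onto B = {(x, y, z) ∈ ℂ³ : x ≠ 0, |y| = 1}; (ii) G(0, λ, μ) = (μ⁻¹, λ, 0) for all λ with |λ| = 1 and μ ≠ 0; (iii) for every t ∈ ℂ with |t| = 1, writing (x, y, z) = G(p, q₁, q₂), one has G(t^r p, t⁻¹q₁, t^{−a}q₂) = (t^a x, t⁻¹y, t^{−a₁}z). -/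
/-- The transition map `G(p, q₁, q₂) = (q₂⁻¹, q₁, p|q₂|²(q₂/|q₂|)^b)`. -/
noncomputable def G14 (b : ℕ) (x : ℂ × ℂ × ℂ) : ℂ × ℂ × ℂ :=
  (x.2.2⁻¹, x.2.1,
    x.1 * (‖x.2.2‖ : ℂ) ^ 2 * (x.2.2 / (‖x.2.2‖ : ℂ)) ^ b)

lemma abs_ofReal_ne (s : ℂ) (hs : s ≠ 0) : (‖s‖ : ℂ) ≠ 0 := by
  simpa using (norm_ne_zero_iff.mpr hs)

lemma factor_ne (b : ℕ) {s : ℂ} (hs : s ≠ 0) :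
    (‖s‖ : ℂ) ^ 2 * (s / (‖s‖ : ℂ)) ^ b ≠ 0 := by
  have h1 := abs_ofReal_ne s hs
  exact mul_ne_zero (pow_ne_zero _ h1) (pow_ne_zero _ (div_ne_zero hs h1))

/-- With `r = a·b − a₁ > 0`: (i) `G` is a bijection from
`A = {(p,q₁,q₂) : |q₁| = 1, q₂ ≠ 0}` onto `B = {(x,y,z) : x ≠ 0, |y| = 1}`;
(ii) `G(0, λ, μ) = (μ⁻¹, λ, 0)` for `|λ| = 1`, `μ ≠ 0`;
(iii) `G` intertwines `t·(p,q₁,q₂) = (t^r p, t⁻¹q₁, t^{−a}q₂)` with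
`t·(x,y,z) = (t^a x, t⁻¹y, t^{−a₁}z)`. -/
theorem stmt_14 (a a₁ b : ℕ) (ha : 0 < a) (ha₁ : 0 < a₁) (hb : 0 < b)
    (r : ℕ) (hr : 0 < r) (hrel : (r : ℤ) = a * b - a₁) :
    Set.BijOn (G14 b) {x : ℂ × ℂ × ℂ | ‖x.2.1‖ = 1 ∧ x.2.2 ≠ 0}
      {x : ℂ × ℂ × ℂ | x.1 ≠ 0 ∧ ‖x.2.1‖ = 1} ∧
    (∀ lam mu : ℂ, ‖lam‖ = 1 → mu ≠ 0 → G14 b (0, lam, mu) = (mu⁻¹, lam, 0)) ∧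
    (∀ t : ℂ, ‖t‖ = 1 →
      ∀ x ∈ {x : ℂ × ℂ × ℂ | ‖x.2.1‖ = 1 ∧ x.2.2 ≠ 0},
        G14 b (t ^ r * x.1, t⁻¹ * x.2.1, (t ^ a)⁻¹ * x.2.2) =
          (t ^ a * (G14 b x).1, t⁻¹ * (G14 b x).2.1, (t ^ a₁)⁻¹ * (G14 b x).2.2)) := by
  refine ⟨⟨?maps, ?inj, ?surj⟩, ?two, ?three⟩
  case maps =>
    rintro ⟨p, q₁, q₂⟩ ⟨h1, h2⟩
    exact ⟨inv_ne_zero h2, h1⟩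
  case inj =>
    rintro ⟨p, q₁, q₂⟩ ⟨h1, h2⟩ ⟨p', q₁', q₂'⟩ ⟨h1', h2'⟩ h
    simp only [G14, Prod.mk.injEq] at h
    obtain ⟨e1, e2, e3⟩ := h
    have hq : q₂ = q₂' := by
      have := congrArg (·⁻¹) e1; simpa using this
    subst hq
    have hp : p = p' := by
      have hne := factor_ne b h2
      rw [mul_assoc, mul_assoc] at e3
      exact mul_right_cancel₀ hne e3
    simp [Prod.ext_iff, hp, e2]
  case surj =>
    rintro ⟨x, y, z⟩ ⟨hx, hy⟩
    simp only [Set.mem_setOf_eq] at hx hy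
    refine ⟨(z / ((‖x⁻¹‖ : ℂ) ^ 2 * (x⁻¹ / (‖x⁻¹‖ : ℂ)) ^ b), y, x⁻¹),
      ⟨hy, inv_ne_zero hx⟩, ?_⟩
    have hA := abs_ofReal_ne x hx
    have hAi := abs_ofReal_ne _ (inv_ne_zero hx)
    simp only [G14]
    refine Prod.ext (by simp) (Prod.ext rfl ?_)
    simp only
    field_simp
    rw [mul_div_assoc, div_self (by simpa using hAi), mul_one]
  case two =>
    intro lam mu hlam hmu
    simp [G14]
  case three =>
    intro t ht ⟨p, q₁, q₂⟩ ⟨h1, h2⟩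
    have ht0 : t ≠ 0 := by
      intro h; rw [h] at ht; simp at ht
    simp only [G14]
    refine Prod.ext ?_ (Prod.ext rfl ?_)
    · simp [mul_inv, mul_comm]
    · simp only [norm_mul, norm_inv, norm_pow, ht, one_pow, inv_one, one_mul,
        Complex.ofReal_mul, Complex.ofReal_one]
      have key : t ^ r * ((t ^ a)⁻¹) ^ b = (t ^ a₁)⁻¹ := by
        have h : (t : ℂ) ^ (r : ℤ) * (t ^ ((a : ℤ) * b))⁻¹ = (t ^ (a₁ : ℤ))⁻¹ := by
          rw [← zpow_neg, ← zpow_add₀ ht0, ← zpow_neg]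
          congr 1
          omega
        rw [zpow_natCast, zpow_natCast, zpow_mul, zpow_natCast, zpow_natCast,
          ← inv_pow] at h
        exact h
      calc t ^ r * p * (‖q₂‖ : ℂ) ^ 2 * ((t ^ a)⁻¹ * q₂ / (‖q₂‖ : ℂ)) ^ b
          = (t ^ r * ((t ^ a)⁻¹) ^ b) * (p * (‖q₂‖ : ℂ) ^ 2 * (q₂ / (‖q₂‖ : ℂ)) ^ b) := by
            rw [mul_div_assoc, mul_pow]; ring
        _ = _ := by rw [key]
end

section
/- Let a, a₁, b₁ be positive integers with r = a·b₁ − a₁ positive. Define π′(p, q₁, u) = (u^r p, u⁻¹q₁, u^{−a}) on ℂ × ℂ × 𝕊¹, f(p, q₁, q₂) = (p|q₁|, q₁/|q₁|, q₂/|q₁|) on triples with q₁ ≠ 0 and |q₂| = 1, and π̃(x, y₁, y₂) = (y₁^r x, y₁⁻¹, y₂y₁^{−a}) on triples with |y₁| = 1, where 𝕊¹ = {u ∈ ℂ : |u| = 1}. Then for every p ∈ ℂ, q₁ ∈ ℂ with q₁ ≠ 0, and u ∈ 𝕊¹, the composition satisfies π̃(f(π′(p, q₁, u))) = ( p|q₁|(q₁/|q₁|)^r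 , (|q₁|/q₁)·u , q₁^{−a}|q₁|^{a−1} ). -/
/-- `π′(p, q₁, u) = (u^r p, u⁻¹q₁, u^{−a})`. -/
noncomputable def piPrime19 (r a : ℕ) (x : ℂ × ℂ × ℂ) : ℂ × ℂ × ℂ :=
  (x.2.2 ^ r * x.1, x.2.2⁻¹ * x.2.1, (x.2.2 ^ a)⁻¹)

/-- The gluing map `f(p, q₁, q₂) = (p|q₁|, q₁/|q₁|, q₂/|q₁|)`. -/
noncomputable def f19 (x : ℂ × ℂ × ℂ) : ℂ × ℂ × ℂ :=
  (x.1 * (‖x.2.1‖ : ℂ), x.2.1 / (‖x.2.1‖ : ℂ),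
    x.2.2 / (‖x.2.1‖ : ℂ))

/-- `π̃(x, y₁, y₂) = (y₁^r x, y₁⁻¹, y₂y₁^{−a})`. -/
noncomputable def piTilde19 (r a : ℕ) (x : ℂ × ℂ × ℂ) : ℂ × ℂ × ℂ :=
  (x.2.1 ^ r * x.1, x.2.1⁻¹, x.2.2 * (x.2.1 ^ a)⁻¹)

/-- With `r = a·b₁ − a₁ > 0`, for `q₁ ≠ 0` and `|u| = 1`:
`π̃(f(π′(p, q₁, u))) = (p|q₁|(q₁/|q₁|)^r, (|q₁|/q₁)·u, q₁^{−a}|q₁|^{a−1})`. -/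
theorem stmt_19 (a a₁ b₁ : ℕ) (ha : 0 < a) (ha₁ : 0 < a₁) (hb₁ : 0 < b₁)
    (r : ℕ) (hr : 0 < r) (hrel : (r : ℤ) = a * b₁ - a₁)
    (p q₁ u : ℂ) (hq₁ : q₁ ≠ 0) (hu : ‖u‖ = 1) :
    piTilde19 r a (f19 (piPrime19 r a (p, q₁, u))) =
      (p * (‖q₁‖ : ℂ) * (q₁ / (‖q₁‖ : ℂ)) ^ r,
        ((‖q₁‖ : ℂ) / q₁) * u,
        (q₁ ^ a)⁻¹ * (‖q₁‖ : ℂ) ^ (a - 1)) := by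
  have hu0 : u ≠ 0 := by intro h; simp [h] at hu
  have habs : ‖u⁻¹ * q₁‖ = ‖q₁‖ := by
    simp [map_mul, hu]
  have hq0 : (‖q₁‖ : ℂ) ≠ 0 := by
    simpa using (norm_ne_zero_iff.mpr hq₁)
  have hpow : (‖q₁‖ : ℂ) ^ a = (‖q₁‖ : ℂ) ^ (a - 1) * (‖q₁‖ : ℂ) := by
    rw [← pow_succ, Nat.sub_add_cancel ha]
  simp only [piPrime19, f19, piTilde19, habs]
  refine Prod.ext ?_ (Prod.ext ?_ ?_) <;> simp only
  · field_simp
    have hur : u ^ r * u⁻¹ ^ r = 1 := by rw [← mul_pow, mul_inv_cancel₀ hu0, one_pow]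
    linear_combination (q₁ ^ r * (↑‖q₁‖)⁻¹ ^ r * p) * hur
  · field_simp
  · field_simp
    rw [div_pow, mul_pow, hpow]
    field_simp
end
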